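/- Every connected induced subgraph of the ladder graph Q_n can be constructed recursively by pasting along complete subgraphs (single vertices or single edges), starting from single vertices, single edges, and subsquares (induced 4-cycles); moreover, if two subsquares of an induced subgraph intersect nontrivially, they intersect in a common edge, and if a subsquare and a maximal edge not contained in any subsquare intersect, they intersect in a single vertex. -/

import Mathlib

/-- The ladder graph `Q_n` (a row of `n` squares), 0-indexed. -/
def ladderGraph (n : ℕ) : SimpleGraph (Fin (2 * (n + 1))) :=
  SimpleGraph.fromRel (fun a b =>
    (∃ i, 1 ≤ i ∧ i ≤ n ∧
      (((a : ℕ) = 2 * i - 2 ∧ (b : ℕ) = 2 * i) ∨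
       ((a : ℕ) = 2 * i - 1 ∧ (b : ℕ) = 2 * i + 1))) ∨
    (∃ i, 1 ≤ i ∧ i ≤ n + 1 ∧ (a : ℕ) = 2 * i - 2 ∧ (b : ℕ) = 2 * i - 1))

/-- `IsSubsquare G T`: the induced subgraph of `G` on `T` is a 4-cycle. -/
def IsSubsquare {V : Type*} (G : SimpleGraph V) (T : Set V) : Prop :=
  Nonempty (G.induce T ≃g SimpleGraph.cycleGraph 4)

/-- Induced subgraphs (given by their vertex sets) of an ambient graph `G` that can
be constructed recursively by pasting along complete subgraphs (a single vertex or a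
single edge), starting from single vertices, single edges and subsquares. -/
inductive PastingConstructible {V : Type*} (G : SimpleGraph V) : Set V → Prop
  | vertex (v : V) : PastingConstructible G {v}
  | edge {u v : V} (h : G.Adj u v) : PastingConstructible G {u, v}
  | square (S : Set V) (h : IsSubsquare G S) : PastingConstructible G S
  | paste (S₁ S₂ : Set V)
      (h₁ : PastingConstructible G S₁) (h₂ : PastingConstructible G S₂)
      (hcomplete : (∃ v, S₁ ∩ S₂ = {v}) ∨ (∃ u v, G.Adj u v ∧ S₁ ∩ S₂ = {u, v}))
      (hcross : ∀ a ∈ S₁ \ S₂, ∀ b ∈ S₂ \ S₁, ¬ G.Adj a b) :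
      PastingConstructible G (S₁ ∪ S₂)

/-! ### Auxiliary lemmas -/

lemma ladder_adj {n : ℕ} {a b : Fin (2 * (n + 1))} :
    (ladderGraph n).Adj a b ↔ (a : ℕ) ≠ (b : ℕ) ∧
      ((a : ℕ) / 2 = (b : ℕ) / 2 ∨ (b : ℕ) = (a : ℕ) + 2 ∨ (a : ℕ) = (b : ℕ) + 2) := by
  have ha := a.isLt
  have hb := b.isLt
  constructor
  · rintro ⟨hne, h | h⟩ <;>
    · refine ⟨fun h' => hne (Fin.ext h'), ?_⟩
      rcases h with ⟨i, h1, h2, h3⟩ | ⟨i, h1, h2, h3⟩ <;> omega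
  · rintro ⟨hne, h⟩
    refine ⟨fun h' => hne (congrArg Fin.val h'), ?_⟩
    rcases h with h | h | h
    · rcases Nat.lt_or_ge (a : ℕ) (b : ℕ) with hlt | hge
      · left; right; exact ⟨(a : ℕ) / 2 + 1, by omega, by omega, by omega⟩
      · right; right; exact ⟨(b : ℕ) / 2 + 1, by omega, by omega, by omega⟩
    · left; left
      rcases Nat.mod_two_eq_zero_or_one (a : ℕ) with he | ho
      · refine ⟨(a : ℕ) / 2 + 1, by omega, by omega, Or.inl ⟨by omega, by omega⟩⟩
      · refine ⟨(a : ℕ) / 2 + 1, by omega, by omega, Or.inr ⟨by omega, by omega⟩⟩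
    · right; left
      rcases Nat.mod_two_eq_zero_or_one (b : ℕ) with he | ho
      · refine ⟨(b : ℕ) / 2 + 1, by omega, by omega, Or.inl ⟨by omega, by omega⟩⟩
      · refine ⟨(b : ℕ) / 2 + 1, by omega, by omega, Or.inr ⟨by omega, by omega⟩⟩

lemma retract_connected {V : Type*} {G : SimpleGraph V} {S R : Set V}
    (f : V → V) (hf : ∀ x ∈ S, f x ∈ R) (hfix : ∀ x ∈ R, f x = x) (hRS : R ⊆ S)
    (hadj : ∀ x ∈ S, ∀ y ∈ S, G.Adj x y → f x = f y ∨ G.Adj (f x) (f y))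
    (hconn : (G.induce S).Connected) (hne : R.Nonempty) : (G.induce R).Connected := by
  obtain ⟨r, hr⟩ := hne
  have key : ∀ (x y : ↥S) (w : (G.induce S).Walk x y),
      (G.induce R).Reachable ⟨f x, hf _ x.2⟩ ⟨f y, hf _ y.2⟩ := by
    intro x y w
    induction w with
    | nil => exact SimpleGraph.Reachable.refl _
    | cons h p ih =>
      rename_i a b c
      have hab : G.Adj a.val b.val := h
      rcases hadj a a.2 b b.2 hab with heq | hadj'
      · have : (⟨f a.val, hf _ a.2⟩ : ↥R) = ⟨f b.val, hf _ b.2⟩ := Subtype.ext heq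
        rw [this]; exact ih
      · exact (SimpleGraph.Adj.reachable
          (by exact hadj' : (G.induce R).Adj ⟨f a, hf _ a.2⟩ ⟨f b, hf _ b.2⟩)).trans ih
  haveI : Nonempty ↥R := ⟨⟨r, hr⟩⟩
  refine ⟨fun a b => ?_⟩
  obtain ⟨a, ha⟩ := a
  obtain ⟨b, hb⟩ := b
  obtain ⟨w⟩ := hconn.preconnected ⟨a, hRS ha⟩ ⟨b, hRS hb⟩
  have := key _ _ w
  have e1 : (⟨f a, hf _ (hRS ha)⟩ : ↥R) = ⟨a, ha⟩ := Subtype.ext (hfix a ha)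
  have e2 : (⟨f b, hf _ (hRS hb)⟩ : ↥R) = ⟨b, hb⟩ := Subtype.ext (hfix b hb)
  rwa [e1, e2] at this

lemma isSubsquare_core {V : Type*} (G : SimpleGraph V) (a b c d : V)
    (hab : G.Adj a b) (hbc : G.Adj b c) (hcd : G.Adj c d) (hda : G.Adj d a)
    (hac : ¬ G.Adj a c) (hbd : ¬ G.Adj b d) (hac' : a ≠ c) (hbd' : b ≠ d) :
    IsSubsquare G {a, b, c, d} := by
  classical
  have hab' : a ≠ b := hab.ne
  have hbc' : b ≠ c := hbc.ne
  have hcd' : c ≠ d := hcd.ne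
  have hda' : d ≠ a := hda.ne
  have ha : a ∈ ({a,b,c,d} : Set V) := by simp
  have hb : b ∈ ({a,b,c,d} : Set V) := by simp
  have hc : c ∈ ({a,b,c,d} : Set V) := by simp
  have hd : d ∈ ({a,b,c,d} : Set V) := by simp
  let F : Fin 4 → ↥({a,b,c,d} : Set V) := ![⟨a, ha⟩, ⟨b, hb⟩, ⟨c, hc⟩, ⟨d, hd⟩]
  let Ginv : ↥({a,b,c,d} : Set V) → Fin 4 := fun x =>
    if x.val = a then 0 else if x.val = b then 1 else if x.val = c then 2 else 3
  have hca : ¬ G.Adj c a := fun h => hac h.symm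
  have hdb : ¬ G.Adj d b := fun h => hbd h.symm
  have h21 : ((-2 : Fin 4) = 1) = False := by decide
  have left : Function.LeftInverse Ginv F := by
    intro k
    fin_cases k <;> simp [F, Ginv, hab'.symm, hac'.symm, hbc'.symm, hbd'.symm, hcd'.symm, hda']
  have right : Function.RightInverse Ginv F := by
    rintro ⟨x, hx⟩
    rcases hx with h | h | h | h <;> subst h <;>
      simp [F, Ginv, hab'.symm, hac'.symm, hbc'.symm, hbd'.symm, hcd'.symm, hda']
  refine ⟨SimpleGraph.Iso.symm ⟨⟨F, Ginv, left, right⟩, ?_⟩⟩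
  intro u v
  fin_cases u <;> fin_cases v <;>
    simp only [Equiv.coe_fn_mk, SimpleGraph.comap_adj, SimpleGraph.cycleGraph_adj, F,
      Matrix.cons_val_zero, Matrix.cons_val_one, Matrix.head_cons, Matrix.cons_val_two,
      Matrix.tail_cons, Matrix.cons_val_three] <;>
    simp [hab, hbc, hcd, hda, hab.symm, hbc.symm, hcd.symm, hda.symm, hac, hbd,
      hca, hdb, h21, G.irrefl] <;> decide

lemma subsquare_elim {V : Type*} {G : SimpleGraph V} {T : Set V}
    (h : IsSubsquare G T) :
    ∃ a b c d : V, T = {a, b, c, d} ∧ G.Adj a b ∧ G.Adj b c ∧ G.Adj c d ∧ G.Adj d a ∧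
      ¬ G.Adj a c ∧ ¬ G.Adj b d ∧ a ≠ c ∧ b ≠ d := by
  obtain ⟨e⟩ := h
  set f := e.symm with hf
  refine ⟨(f 0).val, (f 1).val, (f 2).val, (f 3).val, ?_, ?_, ?_, ?_, ?_, ?_, ?_, ?_, ?_⟩
  · ext x
    constructor
    · intro hx
      obtain ⟨k, hk⟩ : ∃ k, e ⟨x, hx⟩ = k := ⟨_, rfl⟩
      have hx' : f k = ⟨x, hx⟩ := by rw [← hk]; exact e.symm_apply_apply _
      fin_cases k <;> simp_all
    · rintro (h | h | h | h) <;> subst h <;> exact (f _).2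
  · exact f.map_rel_iff.mpr (by decide)
  · exact f.map_rel_iff.mpr (by decide)
  · exact f.map_rel_iff.mpr (by decide)
  · exact f.map_rel_iff.mpr (by decide)
  · exact fun hadj => (by decide : ¬ (SimpleGraph.cycleGraph 4).Adj 0 2) (f.map_rel_iff.mp hadj)
  · exact fun hadj => (by decide : ¬ (SimpleGraph.cycleGraph 4).Adj 1 3) (f.map_rel_iff.mp hadj)
  · intro hh
    have : f 0 = f 2 := Subtype.ext hh
    simpa using f.injective this
  · intro hh
    have : f 1 = f 3 := Subtype.ext hh
    simpa using f.injective this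

lemma ladder_subsquare {n : ℕ} {T : Set (Fin (2 * (n + 1)))}
    (h : IsSubsquare (ladderGraph n) T) :
    ∃ m : ℕ, 2 * m + 3 < 2 * (n + 1) ∧
      T = {x : Fin (2 * (n + 1)) | 2 * m ≤ (x : ℕ) ∧ (x : ℕ) ≤ 2 * m + 3} := by
  obtain ⟨a, b, c, d, hT, hab, hbc, hcd, hda, hac, hbd, hac', hbd'⟩ := subsquare_elim h
  rw [ladder_adj] at hab hbc hcd hda
  have hacv : (a : ℕ) ≠ (c : ℕ) := fun hh => hac' (Fin.ext hh)
  have hbdv : (b : ℕ) ≠ (d : ℕ) := fun hh => hbd' (Fin.ext hh)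
  have hacn : ¬ ((a : ℕ) / 2 = (c : ℕ) / 2 ∨ (c : ℕ) = (a : ℕ) + 2 ∨ (a : ℕ) = (c : ℕ) + 2) :=
    fun hh => hac (ladder_adj.mpr ⟨hacv, hh⟩)
  have hbdn : ¬ ((b : ℕ) / 2 = (d : ℕ) / 2 ∨ (d : ℕ) = (b : ℕ) + 2 ∨ (b : ℕ) = (d : ℕ) + 2) :=
    fun hh => hbd (ladder_adj.mpr ⟨hbdv, hh⟩)
  have ha := a.isLt; have hb := b.isLt; have hc := c.isLt; have hd := d.isLt
  obtain ⟨ka, ra, hra, hA⟩ : ∃ k r : ℕ, r < 2 ∧ (a:ℕ) = 2*k + r :=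
    ⟨(a:ℕ)/2, (a:ℕ)%2, by omega, by omega⟩
  obtain ⟨kb, rb, hrb, hB⟩ : ∃ k r : ℕ, r < 2 ∧ (b:ℕ) = 2*k + r :=
    ⟨(b:ℕ)/2, (b:ℕ)%2, by omega, by omega⟩
  obtain ⟨kc, rc, hrc, hC⟩ : ∃ k r : ℕ, r < 2 ∧ (c:ℕ) = 2*k + r :=
    ⟨(c:ℕ)/2, (c:ℕ)%2, by omega, by omega⟩
  obtain ⟨kd, rd, hrd, hD⟩ : ∃ k r : ℕ, r < 2 ∧ (d:ℕ) = 2*k + r :=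
    ⟨(d:ℕ)/2, (d:ℕ)%2, by omega, by omega⟩
  have hab' : (ka = kb ∧ ra ≠ rb) ∨ (kb = ka+1 ∧ ra = rb) ∨ (ka = kb+1 ∧ ra = rb) := by
    rcases hab with ⟨h1, h2 | h2 | h2⟩ <;> omega
  have hbc' : (kb = kc ∧ rb ≠ rc) ∨ (kc = kb+1 ∧ rb = rc) ∨ (kb = kc+1 ∧ rb = rc) := by
    rcases hbc with ⟨h1, h2 | h2 | h2⟩ <;> omega
  have hcd' : (kc = kd ∧ rc ≠ rd) ∨ (kd = kc+1 ∧ rc = rd) ∨ (kc = kd+1 ∧ rc = rd) := by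
    rcases hcd with ⟨h1, h2 | h2 | h2⟩ <;> omega
  have hda' : (kd = ka ∧ rd ≠ ra) ∨ (ka = kd+1 ∧ rd = ra) ∨ (kd = ka+1 ∧ rd = ra) := by
    rcases hda with ⟨h1, h2 | h2 | h2⟩ <;> omega
  have hacn' : ka ≠ kc ∧ ¬(kc = ka+1 ∧ rc = ra) ∧ ¬(ka = kc+1 ∧ ra = rc) := by
    refine ⟨?_, ?_, ?_⟩ <;> intro hh <;> exact hacn (by omega)
  have hbdn' : kb ≠ kd ∧ ¬(kd = kb+1 ∧ rd = rb) ∧ ¬(kb = kd+1 ∧ rb = rd) := by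
    refine ⟨?_, ?_, ?_⟩ <;> intro hh <;> exact hbdn (by omega)
  have habv : (a:ℕ) ≠ (b:ℕ) := hab.1
  have hbcv : (b:ℕ) ≠ (c:ℕ) := hbc.1
  have hcdv : (c:ℕ) ≠ (d:ℕ) := hcd.1
  have hdav : (d:ℕ) ≠ (a:ℕ) := hda.1
  clear hab hbc hcd hda hacn hbdn
  obtain ⟨m, hm⟩ : ∃ m : ℕ,
      ((a:ℕ) = 2*m ∨ (a:ℕ) = 2*m+1 ∨ (a:ℕ) = 2*m+2 ∨ (a:ℕ) = 2*m+3) ∧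
      ((b:ℕ) = 2*m ∨ (b:ℕ) = 2*m+1 ∨ (b:ℕ) = 2*m+2 ∨ (b:ℕ) = 2*m+3) ∧
      ((c:ℕ) = 2*m ∨ (c:ℕ) = 2*m+1 ∨ (c:ℕ) = 2*m+2 ∨ (c:ℕ) = 2*m+3) ∧
      ((d:ℕ) = 2*m ∨ (d:ℕ) = 2*m+1 ∨ (d:ℕ) = 2*m+2 ∨ (d:ℕ) = 2*m+3) ∧
      2 * m + 3 < 2 * (n + 1) :=
    ⟨min (min ka kb) (min kc kd), by
      rcases hab' with h1 | h1 | h1 <;> rcases hbc' with h2 | h2 | h2 <;>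
        rcases hcd' with h3 | h3 | h3 <;> rcases hda' with h4 | h4 | h4 <;> omega⟩
  clear hab' hbc' hcd' hda' hacn' hbdn' hA hB hC hD hra hrb hrc hrd
  obtain ⟨hma, hmb, hmc, hmd, hmn⟩ := hm
  have ba : 2*m ≤ (a:ℕ) ∧ (a:ℕ) ≤ 2*m+3 := by omega
  have bb : 2*m ≤ (b:ℕ) ∧ (b:ℕ) ≤ 2*m+3 := by omega
  have bc : 2*m ≤ (c:ℕ) ∧ (c:ℕ) ≤ 2*m+3 := by omega
  have bd2 : 2*m ≤ (d:ℕ) ∧ (d:ℕ) ≤ 2*m+3 := by omega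
  clear hma hmb hmc hmd
  have hsub : ({(a:ℕ),(b:ℕ),(c:ℕ),(d:ℕ)} : Finset ℕ) = {2*m, 2*m+1, 2*m+2, 2*m+3} := by
    apply Finset.eq_of_subset_of_card_le
    · intro y hy
      simp only [Finset.mem_insert, Finset.mem_singleton] at hy ⊢
      rcases hy with h | h | h | h <;> omega
    · have e1 : (2*m:ℕ) ∉ ({2*m+1, 2*m+2, 2*m+3} : Finset ℕ) := by
        simp only [Finset.mem_insert, Finset.mem_singleton]; omega
      have e2 : (2*m+1:ℕ) ∉ ({2*m+2, 2*m+3} : Finset ℕ) := by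
        simp only [Finset.mem_insert, Finset.mem_singleton]; omega
      have e3 : (2*m+2:ℕ) ∉ ({2*m+3} : Finset ℕ) := by
        simp only [Finset.mem_singleton]; omega
      have f1 : (a:ℕ) ∉ ({(b:ℕ),(c:ℕ),(d:ℕ)} : Finset ℕ) := by
        simp only [Finset.mem_insert, Finset.mem_singleton]; omega
      have f2 : (b:ℕ) ∉ ({(c:ℕ),(d:ℕ)} : Finset ℕ) := by
        simp only [Finset.mem_insert, Finset.mem_singleton]; omega
      have f3 : (c:ℕ) ∉ ({(d:ℕ)} : Finset ℕ) := by
        simp only [Finset.mem_singleton]; omega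
      have h1 : ({2*m, 2*m+1, 2*m+2, 2*m+3} : Finset ℕ).card = 4 := by
        rw [Finset.card_insert_of_notMem e1, Finset.card_insert_of_notMem e2,
          Finset.card_insert_of_notMem e3, Finset.card_singleton]
      have h2 : ({(a:ℕ),(b:ℕ),(c:ℕ),(d:ℕ)} : Finset ℕ).card = 4 := by
        rw [Finset.card_insert_of_notMem f1, Finset.card_insert_of_notMem f2,
          Finset.card_insert_of_notMem f3, Finset.card_singleton]
      omega
  refine ⟨m, hmn, ?_⟩
  subst hT
  ext x
  simp only [Set.mem_insert_iff, Set.mem_singleton_iff, Set.mem_setOf_eq, Fin.ext_iff]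
  constructor
  · rintro (h | h | h | h) <;> omega
  · intro hx2
    have hmem : (x:ℕ) ∈ ({2*m, 2*m+1, 2*m+2, 2*m+3} : Finset ℕ) := by
      simp only [Finset.mem_insert, Finset.mem_singleton]; omega
    rw [← hsub] at hmem
    simpa using hmem

/-! ### Part 1: the main induction -/

lemma ladder_part1 {n : ℕ} : ∀ (k : ℕ) (S : Set (Fin (2 * (n + 1)))), S.ncard ≤ k →
    ((ladderGraph n).induce S).Connected → PastingConstructible (ladderGraph n) S := by
  intro k
  induction k with
  | zero =>
    intro S hcard hconn
    exfalso
    obtain ⟨x⟩ := hconn.nonempty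
    have h1 : 0 < S.ncard := (Set.ncard_pos (Set.toFinite S)).mpr ⟨x.val, x.2⟩
    omega
  | succ k ih =>
    intro S hcard hconn
    classical
    have hSfin : S.Finite := Set.toFinite S
    obtain ⟨x0⟩ := hconn.nonempty
    have hne : S.Nonempty := ⟨x0.val, x0.2⟩
    have hpos : 0 < S.ncard := (Set.ncard_pos hSfin).mpr hne
    rcases Nat.lt_or_ge S.ncard 2 with hlt2 | hge2
    · have h1 : S.ncard = 1 := by omega
      obtain ⟨v, rfl⟩ := Set.ncard_eq_one.mp h1
      exact PastingConstructible.vertex v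
    · -- `S` has at least two elements; every vertex has a neighbour in `S`.
      have hnontriv : ∃ x ∈ S, ∃ y ∈ S, x ≠ y := by
        by_contra hcon
        push_neg at hcon
        obtain ⟨z, hz⟩ := hne
        have : S = {z} := by
          ext w
          simp only [Set.mem_singleton_iff]
          exact ⟨fun hw => hcon w hw z hz, fun hw => hw ▸ hz⟩
        rw [this, Set.ncard_singleton] at hge2
        omega
      have nbr : ∀ v ∈ S, ∃ u ∈ S, (ladderGraph n).Adj v u := by
        intro v hv
        obtain ⟨x, hx, y, hy, hxy⟩ := hnontriv
        have hw : ∃ w ∈ S, w ≠ v := by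
          by_cases hxv : x = v
          · exact ⟨y, hy, fun hh => hxy (hxv.trans hh.symm)⟩
          · exact ⟨x, hx, hxv⟩
        obtain ⟨w, hwS, hwv⟩ := hw
        obtain ⟨p⟩ := hconn.preconnected ⟨v, hv⟩ ⟨w, hwS⟩
        have hpnil : ¬ p.Nil := SimpleGraph.Walk.not_nil_of_ne
          (fun hh => hwv (congrArg Subtype.val hh).symm)
        obtain ⟨z, hz, -, -⟩ := SimpleGraph.Walk.not_nil_iff.mp hpnil
        exact ⟨z.val, z.2, hz⟩
      by_cases hleaf : ∃ v ∈ S, ∃ u ∈ S, (ladderGraph n).Adj v u ∧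
          ∀ w ∈ S, (ladderGraph n).Adj v w → w = u
      · -- leaf case
        obtain ⟨v, hvS, u, huS, hadj, huniq⟩ := hleaf
        have hvu : v ≠ u := hadj.ne
        have hS' : (S \ {v}).ncard ≤ k := by
          rw [Set.ncard_diff_singleton_of_mem hvS]; omega
        have huS' : u ∈ S \ {v} := ⟨huS, fun hh => hvu (Set.mem_singleton_iff.mp hh).symm⟩
        have hconn' : ((ladderGraph n).induce (S \ {v})).Connected := by
          refine retract_connected (fun x => if x = v then u else x) ?_ ?_
            Set.diff_subset ?_ hconn ⟨u, huS'⟩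
          · intro x hx
            by_cases hxv : x = v
            · rw [if_pos hxv]; exact huS'
            · rw [if_neg hxv]
              exact ⟨hx, fun hh => hxv (Set.mem_singleton_iff.mp hh)⟩
          · intro x hx
            have hxv : x ≠ v := fun hh => hx.2 (Set.mem_singleton_iff.mpr hh)
            rw [if_neg hxv]
          · intro x hx y hy hxy
            by_cases hxv : x = v
            · have hyu : y = u := huniq y hy (hxv ▸ hxy)
              have hyv : y ≠ v := by rw [hyu]; exact fun hh => hvu hh.symm
              rw [if_pos hxv, if_neg hyv, hyu]
              exact Or.inl rfl
            · by_cases hyv : y = v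
              · have hxu : x = u := huniq x hx (hyv ▸ hxy.symm)
                have hxv' : x ≠ v := hxv
                rw [if_pos hyv, if_neg hxv', hxu]
                exact Or.inl rfl
              · rw [if_neg hxv, if_neg hyv]
                exact Or.inr hxy
        have hpc' := ih (S \ {v}) hS' hconn'
        have hSeq : S = (S \ {v}) ∪ {v, u} := by
          ext x
          simp only [Set.mem_union, Set.mem_diff, Set.mem_insert_iff, Set.mem_singleton_iff]
          constructor
          · intro hx
            by_cases hxv : x = v
            · exact Or.inr (Or.inl hxv)
            · exact Or.inl ⟨hx, hxv⟩
          · rintro (⟨hx, -⟩ | rfl | rfl) <;> first | exact hx | exact hvS | exact huS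
        rw [hSeq]
        refine PastingConstructible.paste _ _ hpc' (PastingConstructible.edge hadj) ?_ ?_
        · left
          refine ⟨u, ?_⟩
          ext x
          simp only [Set.mem_inter_iff, Set.mem_diff, Set.mem_insert_iff,
            Set.mem_singleton_iff]
          constructor
          · rintro ⟨⟨hxS, hxv⟩, rfl | rfl⟩
            · exact absurd rfl hxv
            · rfl
          · rintro rfl
            exact ⟨huS', Or.inr rfl⟩
        · rintro x ⟨⟨hxS, hxv⟩, hxnot⟩ y ⟨hy, hyn⟩ hadj'
          simp only [Set.mem_insert_iff, Set.mem_singleton_iff] at hy hxnot hxv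
          have hyv : y = v := by
            rcases hy with rfl | rfl
            · rfl
            · exact absurd huS' hyn
          subst hyv
          have : x = u := huniq x hxS hadj'.symm
          exact hxnot (Or.inr this)
      · -- no leaf: peel a square from the right end
        push_neg at hleaf
        have two : ∀ v ∈ S, ∃ u₁ ∈ S, ∃ u₂ ∈ S,
            (ladderGraph n).Adj v u₁ ∧ (ladderGraph n).Adj v u₂ ∧ u₁ ≠ u₂ := by
          intro v hv
          obtain ⟨u, hu, hadj⟩ := nbr v hv
          obtain ⟨w, hw, hadj2, hne2⟩ := hleaf v hv u hu hadj
          exact ⟨w, hw, u, hu, hadj2, hadj, hne2⟩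
        obtain ⟨a, haS', hamax'⟩ := Finset.exists_max_image hSfin.toFinset
          (fun x => (x:ℕ)) (by rwa [Set.Finite.toFinset_nonempty])
        rw [Set.Finite.mem_toFinset] at haS'
        have hamax : ∀ x ∈ S, (x:ℕ) ≤ (a:ℕ) := by
          intro x hx
          exact hamax' x (hSfin.mem_toFinset.mpr hx)
        obtain ⟨u₁, hu₁S, u₂, hu₂S, hadj1, hadj2, hne12⟩ := two a haS'
        rw [ladder_adj] at hadj1 hadj2
        have hm1 := hamax u₁ hu₁S
        have hm2 := hamax u₂ hu₂S
        have hne12' : (u₁:ℕ) ≠ (u₂:ℕ) := fun hh => hne12 (Fin.ext hh)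
        have haLt := a.isLt
        obtain ⟨m, hma, h12⟩ : ∃ m : ℕ, (a:ℕ) = 2*m+3 ∧
            (((u₁:ℕ) = 2*m+2 ∧ (u₂:ℕ) = 2*m+1) ∨ ((u₁:ℕ) = 2*m+1 ∧ (u₂:ℕ) = 2*m+2)) :=
          ⟨((a:ℕ)-3)/2, by omega, by omega⟩
        obtain ⟨p1, hp1S, hp1, p2, hp2S, hp2⟩ :
            ∃ p1 ∈ S, (p1:ℕ) = 2*m+2 ∧ ∃ p2 ∈ S, (p2:ℕ) = 2*m+1 := by
          rcases h12 with ⟨h1, h2⟩ | ⟨h1, h2⟩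
          · exact ⟨u₁, hu₁S, h1, u₂, hu₂S, h2⟩
          · exact ⟨u₂, hu₂S, h2, u₁, hu₁S, h1⟩
        obtain ⟨w1, hw1S, w2, hw2S, hadjw1, hadjw2, hnw⟩ := two p1 hp1S
        obtain ⟨p3, hp3S, hp3⟩ : ∃ p3 ∈ S, (p3:ℕ) = 2*m := by
          rw [ladder_adj] at hadjw1 hadjw2
          have hb1 := hamax w1 hw1S
          have hb2 := hamax w2 hw2S
          have hnww : (w1:ℕ) ≠ (w2:ℕ) := fun hh => hnw (Fin.ext hh)
          rcases (by omega : (w1:ℕ) = 2*m ∨ (w2:ℕ) = 2*m) with hh | hh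
          · exact ⟨w1, hw1S, hh⟩
          · exact ⟨w2, hw2S, hh⟩
        clear hadjw1 hadjw2 hnw hw1S hw2S
        -- distinctness of the four corners
        have dap1 : a ≠ p1 := fun hh => by rw [hh] at hma; omega
        have dap2 : a ≠ p2 := fun hh => by rw [hh] at hma; omega
        have dap3 : a ≠ p3 := fun hh => by rw [hh] at hma; omega
        have dp1p2 : p1 ≠ p2 := fun hh => by rw [hh] at hp1; omega
        have dp1p3 : p1 ≠ p3 := fun hh => by rw [hh] at hp1; omega
        have dp2p3 : p2 ≠ p3 := fun hh => by rw [hh] at hp2; omega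
        -- the square
        have hsq : IsSubsquare (ladderGraph n) {p3, p2, a, p1} := by
          refine isSubsquare_core _ p3 p2 a p1 ?_ ?_ ?_ ?_ ?_ ?_
            (fun hh => dap3 hh.symm) (fun hh => dp1p2 hh.symm)
          · exact ladder_adj.mpr ⟨by omega, by omega⟩
          · exact ladder_adj.mpr ⟨by omega, by omega⟩
          · exact ladder_adj.mpr ⟨by omega, by omega⟩
          · exact ladder_adj.mpr ⟨by omega, by omega⟩
          · intro hh; rw [ladder_adj] at hh; omega
          · intro hh; rw [ladder_adj] at hh; omega
        set S₁ : Set (Fin (2*(n+1))) := S \ {a, p1} with hS₁def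
        have hp2S₁ : p2 ∈ S₁ := ⟨hp2S, by
          simp only [Set.mem_insert_iff, Set.mem_singleton_iff]
          push_neg
          exact ⟨fun hh => dap2 hh.symm, fun hh => dp1p2 hh.symm⟩⟩
        have hp3S₁ : p3 ∈ S₁ := ⟨hp3S, by
          simp only [Set.mem_insert_iff, Set.mem_singleton_iff]
          push_neg
          exact ⟨fun hh => dap3 hh.symm, fun hh => dp1p3 hh.symm⟩⟩
        have hS₁card : S₁.ncard ≤ k := by
          have hsub : S₁ ⊆ S \ {a} := fun x hx =>
            ⟨hx.1, fun hh => hx.2 (by simp only [Set.mem_singleton_iff] at hh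
                                      simp [hh])⟩
          have := Set.ncard_le_ncard hsub (Set.toFinite _)
          rw [Set.ncard_diff_singleton_of_mem haS'] at this
          omega
        have hconn' : ((ladderGraph n).induce S₁).Connected := by
          refine retract_connected
            (fun x => if (x:ℕ) = 2*m+3 then p2 else if (x:ℕ) = 2*m+2 then p3 else x)
            ?_ ?_ Set.diff_subset ?_ hconn ⟨p3, hp3S₁⟩
          · intro x hx
            split_ifs with h1 h2
            · exact hp2S₁
            · exact hp3S₁
            · refine ⟨hx, ?_⟩
              simp only [Set.mem_insert_iff, Set.mem_singleton_iff]
              push_neg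
              exact ⟨fun hh => h1 (by rw [hh, hma]), fun hh => h2 (by rw [hh, hp1])⟩
          · intro x hx
            have h1 : (x:ℕ) ≠ 2*m+3 := fun hh => hx.2 (by
              simp only [Set.mem_insert_iff, Set.mem_singleton_iff]
              exact Or.inl (Fin.ext (by omega)))
            have h2 : (x:ℕ) ≠ 2*m+2 := fun hh => hx.2 (by
              simp only [Set.mem_insert_iff, Set.mem_singleton_iff]
              exact Or.inr (Fin.ext (by omega)))
            simp only [if_neg h1, if_neg h2]
          · intro x hx y hy hxy
            have hxmax := hamax x hx
            have hymax := hamax y hy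
            have hxy' := ladder_adj.mp hxy
            by_cases h1 : (x:ℕ) = 2*m+3
            · rw [if_pos h1]
              by_cases h3 : (y:ℕ) = 2*m+3
              · exact absurd (h1.trans h3.symm) hxy'.1
              · rw [if_neg h3]
                by_cases h4 : (y:ℕ) = 2*m+2
                · rw [if_pos h4]
                  exact Or.inr (ladder_adj.mpr ⟨by omega, by omega⟩)
                · rw [if_neg h4]
                  exact Or.inl (Fin.ext (show (p2:ℕ) = (y:ℕ) by omega))
            · rw [if_neg h1]
              by_cases h2 : (x:ℕ) = 2*m+2
              · rw [if_pos h2]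
                by_cases h3 : (y:ℕ) = 2*m+3
                · rw [if_pos h3]
                  exact Or.inr (ladder_adj.mpr ⟨by omega, by omega⟩)
                · rw [if_neg h3]
                  by_cases h4 : (y:ℕ) = 2*m+2
                  · exact absurd (h2.trans h4.symm) hxy'.1
                  · rw [if_neg h4]
                    exact Or.inl (Fin.ext (show (p3:ℕ) = (y:ℕ) by omega))
              · rw [if_neg h2]
                by_cases h3 : (y:ℕ) = 2*m+3
                · rw [if_pos h3]
                  exact Or.inl (Fin.ext (show (x:ℕ) = (p2:ℕ) by omega))
                · rw [if_neg h3]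
                  by_cases h4 : (y:ℕ) = 2*m+2
                  · rw [if_pos h4]
                    exact Or.inl (Fin.ext (show (x:ℕ) = (p3:ℕ) by omega))
                  · rw [if_neg h4]
                    exact Or.inr hxy
        have hpc' := ih S₁ hS₁card hconn'
        have hSeq : S = S₁ ∪ {p3, p2, a, p1} := by
          ext x
          simp only [hS₁def, Set.mem_union, Set.mem_diff, Set.mem_insert_iff,
            Set.mem_singleton_iff]
          constructor
          · intro hx
            by_cases hxa : x = a ∨ x = p1
            · rcases hxa with rfl | rfl
              · exact Or.inr (Or.inr (Or.inr (Or.inl rfl)))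
              · exact Or.inr (Or.inr (Or.inr (Or.inr rfl)))
            · push_neg at hxa
              refine Or.inl ⟨hx, fun hmem => ?_⟩
              rcases hmem with rfl | rfl
              · exact hxa.1 rfl
              · exact hxa.2 rfl
          · rintro (⟨hx, -⟩ | rfl | rfl | rfl | rfl)
            exacts [hx, hp3S, hp2S, haS', hp1S]
        rw [hSeq]
        refine PastingConstructible.paste _ _ hpc'
          (PastingConstructible.square _ hsq) ?_ ?_
        · right
          refine ⟨p3, p2, ladder_adj.mpr ⟨by omega, by omega⟩, ?_⟩
          ext x
          simp only [hS₁def, Set.mem_inter_iff, Set.mem_diff, Set.mem_insert_iff,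
            Set.mem_singleton_iff]
          constructor
          · rintro ⟨⟨hxS, hxn⟩, rfl | rfl | rfl | rfl⟩
            · exact Or.inl rfl
            · exact Or.inr rfl
            · exact absurd (Or.inl rfl) hxn
            · exact absurd (Or.inr rfl) hxn
          · rintro (rfl | rfl)
            · exact ⟨hp3S₁, Or.inl rfl⟩
            · exact ⟨hp2S₁, Or.inr (Or.inl rfl)⟩
        · rintro x ⟨⟨hxS, hxn⟩, hxnot⟩ y ⟨hy, hyn⟩ hadj'
          simp only [Set.mem_insert_iff, Set.mem_singleton_iff] at hy hxn hxnot
          push_neg at hxnot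
          obtain ⟨hx3, hx2, hxa, hx1⟩ := hxnot
          have hyval : (y:ℕ) = 2*m+3 ∨ (y:ℕ) = 2*m+2 := by
            rcases hy with rfl | rfl | rfl | rfl
            · exact absurd hp3S₁ hyn
            · exact absurd hp2S₁ hyn
            · exact Or.inl hma
            · exact Or.inr hp1
          have hxmax := hamax x hxS
          rw [ladder_adj] at hadj'
          have hxv3 : (x:ℕ) ≠ 2*m := fun hh => hx3 (Fin.ext (by omega))
          have hxv2 : (x:ℕ) ≠ 2*m+1 := fun hh => hx2 (Fin.ext (by omega))
          have hxva : (x:ℕ) ≠ 2*m+3 := fun hh => hxa (Fin.ext (by omega))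
          have hxv1 : (x:ℕ) ≠ 2*m+2 := fun hh => hx1 (Fin.ext (by omega))
          omega

/-! ### The main theorem -/

/-- Every connected induced subgraph of the ladder graph `Q_n` is
constructible by pasting along single vertices or single edges starting from
vertices, edges and subsquares; moreover two distinct intersecting subsquares of an
induced subgraph meet in a common edge, and a subsquare and an edge not contained in
any subsquare meet in (at most) a single vertex. -/
theorem stmt6 (n : ℕ) :
    (∀ S : Set (Fin (2 * (n + 1))),
      ((ladderGraph n).induce S).Connected → PastingConstructible (ladderGraph n) S) ∧
    (∀ (S T₁ T₂ : Set (Fin (2 * (n + 1)))), T₁ ⊆ S → T₂ ⊆ S →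
      IsSubsquare (ladderGraph n) T₁ → IsSubsquare (ladderGraph n) T₂ →
      T₁ ≠ T₂ → (T₁ ∩ T₂).Nonempty →
      ∃ u v, (ladderGraph n).Adj u v ∧ T₁ ∩ T₂ = {u, v}) ∧
    (∀ (S T : Set (Fin (2 * (n + 1)))) (u v : Fin (2 * (n + 1))), T ⊆ S →
      IsSubsquare (ladderGraph n) T → (ladderGraph n).Adj u v →
      ({u, v} : Set (Fin (2 * (n + 1)))) ⊆ S →
      (¬ ∃ T', T' ⊆ S ∧ IsSubsquare (ladderGraph n) T' ∧
        ({u, v} : Set (Fin (2 * (n + 1)))) ⊆ T') →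
      (({u, v} : Set (Fin (2 * (n + 1)))) ∩ T).Nonempty →
      ∃ w, ({u, v} : Set (Fin (2 * (n + 1)))) ∩ T = {w}) := by
  refine ⟨fun S hconn => ladder_part1 S.ncard S le_rfl hconn, ?_, ?_⟩
  · intro S T₁ T₂ _ _ h1 h2 hne hint
    obtain ⟨m₁, hb₁, rfl⟩ := ladder_subsquare h1
    obtain ⟨m₂, hb₂, rfl⟩ := ladder_subsquare h2
    have hm : m₁ ≠ m₂ := fun hh => hne (by rw [hh])
    obtain ⟨x, hx1, hx2⟩ := hint
    simp only [Set.mem_setOf_eq] at hx1 hx2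
    rcases (by omega : m₂ = m₁ + 1 ∨ m₁ = m₂ + 1) with hh | hh
    · subst hh
      refine ⟨⟨2*m₁+2, by omega⟩, ⟨2*m₁+3, by omega⟩,
        ladder_adj.mpr ⟨show (2*m₁+2:ℕ) ≠ (2*m₁+3:ℕ) by omega,
          Or.inl (show (2*m₁+2:ℕ)/2 = (2*m₁+3:ℕ)/2 by omega)⟩, ?_⟩
      ext y
      simp only [Set.mem_inter_iff, Set.mem_setOf_eq, Set.mem_insert_iff,
        Set.mem_singleton_iff, Fin.ext_iff]
      omega
    · subst hh
      refine ⟨⟨2*m₂+2, by omega⟩, ⟨2*m₂+3, by omega⟩,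
        ladder_adj.mpr ⟨show (2*m₂+2:ℕ) ≠ (2*m₂+3:ℕ) by omega,
          Or.inl (show (2*m₂+2:ℕ)/2 = (2*m₂+3:ℕ)/2 by omega)⟩, ?_⟩
      ext y
      simp only [Set.mem_inter_iff, Set.mem_setOf_eq, Set.mem_insert_iff,
        Set.mem_singleton_iff, Fin.ext_iff]
      omega
  · intro S T u v hTS hT hadj huvS hnT' hne
    by_cases hu : u ∈ T <;> by_cases hv : v ∈ T
    · exact absurd ⟨T, hTS, hT, by
        intro x hx
        simp only [Set.mem_insert_iff, Set.mem_singleton_iff] at hx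
        rcases hx with rfl | rfl <;> assumption⟩ hnT'
    · refine ⟨u, ?_⟩
      ext x
      simp only [Set.mem_inter_iff, Set.mem_insert_iff, Set.mem_singleton_iff]
      constructor
      · rintro ⟨rfl | rfl, hxT⟩
        · rfl
        · exact absurd hxT hv
      · rintro rfl
        exact ⟨Or.inl rfl, hu⟩
    · refine ⟨v, ?_⟩
      ext x
      simp only [Set.mem_inter_iff, Set.mem_insert_iff, Set.mem_singleton_iff]
      constructor
      · rintro ⟨rfl | rfl, hxT⟩
        · exact absurd hxT hu
        · rfl
      · rintro rfl
        exact ⟨Or.inr rfl, hv⟩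
    · exfalso
      obtain ⟨x, hx1, hx2⟩ := hne
      simp only [Set.mem_insert_iff, Set.mem_singleton_iff] at hx1
      rcases hx1 with rfl | rfl
      · exact hu hx2
      · exact hv hx2
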